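/- Let a₁, b₁, c₁, a₂, b₂, c₂, s be complex numbers with a₁, a₂, c₁, c₂ all nonzero. Let r₊ be a nonzero root of c₁ r² + (b₁ - s) r + a₁ = 0 and r₋ a nonzero root of c₂ r² + (b₂ - s) r + a₂ = 0, and assume a₂ ≠ c₂ r₋ and c₁ ≠ a₁ r₊⁻¹. Then the contraction factor for the Robin transmission condition with two overlapping nodes, ρ = [(a₂ - c₂ r₋)/(a₁ r₊⁻² + (b₁-s) r₊⁻¹ + a₁ r₊⁻¹)] · [(c₁ - a₁ r₊⁻¹)/(c₂ r₋ + (b₂-s) r₋ + c₂ r₋²)], equals 1. -/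

import Mathlib

/-- The contraction factor for the Robin transmission condition with two
overlapping nodes equals `1` (no convergence). -/
theorem stmt_4 (a₁ b₁ c₁ a₂ b₂ c₂ s rp rm : ℂ)
    (ha₁ : a₁ ≠ 0) (ha₂ : a₂ ≠ 0) (hc₁ : c₁ ≠ 0) (hc₂ : c₂ ≠ 0)
    (hrp : c₁ * rp ^ 2 + (b₁ - s) * rp + a₁ = 0) (hrp0 : rp ≠ 0)
    (hrm : c₂ * rm ^ 2 + (b₂ - s) * rm + a₂ = 0) (hrm0 : rm ≠ 0)
    (h1 : a₂ ≠ c₂ * rm) (h2 : c₁ ≠ a₁ * rp⁻¹) :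
    ((a₂ - c₂ * rm) / (a₁ * rp⁻¹ ^ 2 + (b₁ - s) * rp⁻¹ + a₁ * rp⁻¹)) *
      ((c₁ - a₁ * rp⁻¹) / (c₂ * rm + (b₂ - s) * rm + c₂ * rm ^ 2)) = 1 := by
  have e1 : a₁ * rp⁻¹ ^ 2 + (b₁ - s) * rp⁻¹ + a₁ * rp⁻¹ = -(c₁ - a₁ * rp⁻¹) := by
    field_simp
    linear_combination hrp
  have e2 : c₂ * rm + (b₂ - s) * rm + c₂ * rm ^ 2 = -(a₂ - c₂ * rm) := by
    linear_combination hrm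
  have hx : a₂ - c₂ * rm ≠ 0 := sub_ne_zero.mpr h1
  have hy : c₁ - a₁ * rp⁻¹ ≠ 0 := sub_ne_zero.mpr h2
  rw [e1, e2, div_neg, div_neg, neg_mul_neg, div_mul_div_comm,
    mul_comm (a₂ - c₂ * rm)]
  exact div_self (mul_ne_zero hy hx)
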